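/- Let P be a polynomial with complex coefficients of degree at most d, written P(x) = ∑_{k=0}^d c_k·binom(x,k). Then for every complex number z with |z| > 1, the series ∑_{n=1}^∞ P(−n)·z^{−n} converges absolutely and ∑_{n=1}^∞ P(−n)·z^{−n} = −(1/(1−z))·∑_{k=0}^d c_k·(z/(1−z))^k. -/

import Mathlib

/-- The binomial polynomial `binom(x,k) = x(x-1)⋯(x-k+1)/k!` over `ℂ`. -/
noncomputable def binomC (x : ℂ) (k : ℕ) : ℂ :=
  (∏ i ∈ Finset.range k, (x - i)) / (Nat.factorial k : ℂ)

lemma prod_asc (n k : ℕ) :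
    (∏ i ∈ Finset.range k, ((n : ℂ) + 1 + i)) = ((n + 1).ascFactorial k : ℂ) := by
  induction k with
  | zero => simp
  | succ k ih =>
    rw [Finset.prod_range_succ, ih, Nat.ascFactorial_succ]
    push_cast
    ring

lemma binomC_neg (n k : ℕ) :
    binomC (-((n : ℂ) + 1)) k = (-1) ^ k * ((n + k).choose k : ℂ) := by
  have h : (∏ i ∈ Finset.range k, (-((n : ℂ) + 1) - i))
      = (-1) ^ k * (∏ i ∈ Finset.range k, ((n : ℂ) + 1 + i)) := by
    have h2 : ∀ i : ℕ, -((n : ℂ) + 1) - i = (-1) * ((n : ℂ) + 1 + i) := fun i => by ring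
    simp_rw [h2]
    rw [Finset.prod_mul_distrib, Finset.prod_const, Finset.card_range]
  rw [binomC, h, prod_asc, Nat.ascFactorial_eq_factorial_mul_choose]
  have hfac : ((Nat.factorial k : ℂ)) ≠ 0 := by exact_mod_cast (Nat.factorial_ne_zero k)
  push_cast
  field_simp


lemma aux_ratio (z : ℂ) (hz0 : z ≠ 0) (hz1 : z ≠ 1) (k : ℕ) :
    -(1/(1-z)) * (z/(1-z))^k = (-1)^k * z⁻¹ * (1/(1-z⁻¹)^(k+1)) := by
  have h1 : (1:ℂ) - z ≠ 0 := sub_ne_zero.mpr (Ne.symm hz1)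
  have h2 : (1:ℂ) - z⁻¹ ≠ 0 := by
    intro h
    have : z⁻¹ = 1 := by linear_combination -h
    exact hz1 (inv_eq_one.mp this)
  have h3 : z - 1 ≠ 0 := sub_ne_zero.mpr hz1
  have step : z/(1-z) = -(1-z⁻¹)⁻¹ := by
    field_simp
    ring
  induction k with
  | zero => simp; field_simp; ring
  | succ k ih =>
    rw [pow_succ, ← mul_assoc, ih, step, pow_succ (-1:ℂ), pow_succ ((1:ℂ)-z⁻¹)]
    set x := (1:ℂ) - z⁻¹ with hx
    field_simp
    ring

/-- For a complex polynomial `P(x) = ∑_{k=0}^d c_k binom(x,k)` and `|z| > 1`, the series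
`∑_{n≥1} P(-n) z^{-n}` converges absolutely, with sum
`-(1/(1-z)) ∑_{k=0}^d c_k (z/(1-z))^k`. -/
theorem stmt_9 (d : ℕ) (c : Fin (d + 1) → ℂ) (z : ℂ) (hz : 1 < ‖z‖) :
    (Summable fun n : ℕ =>
      ‖(∑ k : Fin (d + 1), c k * binomC (-((n : ℂ) + 1)) (k : ℕ)) * (z ^ (n + 1))⁻¹‖) ∧
    (∑' n : ℕ, (∑ k : Fin (d + 1), c k * binomC (-((n : ℂ) + 1)) (k : ℕ)) * (z ^ (n + 1))⁻¹)
      = -(1 / (1 - z)) * ∑ k : Fin (d + 1), c k * (z / (1 - z)) ^ (k : ℕ) := by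
  have hz0 : z ≠ 0 := by
    intro h; rw [h] at hz; simp at hz; linarith
  have hz1 : z ≠ 1 := by
    intro h; rw [h] at hz; simp at hz
  have hw : ‖z⁻¹‖ < 1 := by
    rw [norm_inv]
    rw [inv_lt_one_iff₀]
    right; exact hz
  -- the individual series
  set f : Fin (d + 1) → ℕ → ℂ :=
    fun k n => c k * binomC (-((n : ℂ) + 1)) (k : ℕ) * (z ^ (n + 1))⁻¹ with hf
  have key : ∀ k : Fin (d + 1),
      HasSum (f k) (c k * (-(1 / (1 - z)) * (z / (1 - z)) ^ (k : ℕ))) := by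
    intro k
    have h1 := (hasSum_choose_mul_geometric_of_norm_lt_one (k : ℕ) hw).mul_left
      (c k * (-1) ^ (k : ℕ) * z⁻¹)
    have heq : (fun n : ℕ => c k * (-1) ^ (k : ℕ) * z⁻¹ *
        (((n + (k : ℕ)).choose (k : ℕ) : ℂ) * (z⁻¹) ^ n)) = f k := by
      funext n
      rw [hf]
      simp only
      rw [binomC_neg, pow_succ, mul_inv]
      ring_nf
    rw [heq] at h1
    have e : c k * (-(1 / (1 - z)) * (z / (1 - z)) ^ (k : ℕ))
        = c k * (-1) ^ (k : ℕ) * z⁻¹ * (1 / (1 - z⁻¹) ^ ((k : ℕ) + 1)) := by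
      rw [aux_ratio z hz0 hz1 (k : ℕ)]
      ring
    rw [e]; exact h1
  have hsum : HasSum (fun n : ℕ => ∑ k : Fin (d + 1), f k n)
      (∑ k : Fin (d + 1), c k * (-(1 / (1 - z)) * (z / (1 - z)) ^ (k : ℕ))) :=
    hasSum_sum (fun k _ => key k)
  constructor
  · -- absolute summability
    have hk : ∀ k : Fin (d + 1), Summable (fun n : ℕ => ‖f k n‖) := by
      intro k
      have := (summable_norm_pow_mul_geometric_of_norm_lt_one (k : ℕ) hw)
      have hb : Summable (fun n : ℕ => ‖c k‖ * ‖z⁻¹‖ *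
          (((n + (k : ℕ)).choose (k : ℕ) : ℝ) * ‖z⁻¹‖ ^ n)) :=
        ((summable_choose_mul_geometric_of_norm_lt_one (k : ℕ) (r := ‖z⁻¹‖)
          (by rwa [Real.norm_eq_abs, abs_of_nonneg (norm_nonneg _)])).mul_left _)
      apply hb.of_nonneg_of_le (fun n => norm_nonneg _)
      intro n
      rw [hf]
      simp only
      rw [norm_mul, norm_mul, binomC_neg, norm_mul, norm_pow, norm_neg, norm_one, one_pow,
        one_mul, ← inv_pow, norm_pow, pow_succ]
      have : ‖((n + (k : ℕ)).choose (k : ℕ) : ℂ)‖ = ((n + (k : ℕ)).choose (k : ℕ) : ℝ) := by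
        simp
      rw [this]
      apply le_of_eq
      ring
    have hsum' : Summable (fun n : ℕ => ∑ k : Fin (d + 1), ‖f k n‖) :=
      summable_sum (fun k _ => hk k)
    apply hsum'.of_nonneg_of_le (fun n => norm_nonneg _)
    intro n
    calc ‖(∑ k : Fin (d + 1), c k * binomC (-((n : ℂ) + 1)) (k : ℕ)) * (z ^ (n + 1))⁻¹‖
        = ‖∑ k : Fin (d + 1), f k n‖ := by
          rw [hf]; simp only [← Finset.sum_mul]
      _ ≤ ∑ k : Fin (d + 1), ‖f k n‖ := norm_sum_le _ _
  · have : (fun n : ℕ => (∑ k : Fin (d + 1), c k * binomC (-((n : ℂ) + 1)) (k : ℕ)) * (z ^ (n + 1))⁻¹)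
        = fun n : ℕ => ∑ k : Fin (d + 1), f k n := by
      funext n; rw [hf, Finset.sum_mul]
    rw [this, hsum.tsum_eq, Finset.mul_sum]
    exact Finset.sum_congr rfl (fun k _ => by ring)
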